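/- Let G be a finite simple graph, k a real number, and D0 an orientation of G (a digraph on V(G) containing exactly one of the arcs uv, vu for each edge uv of G). Let D be the digraph obtained from D0 by adding, for each vertex u ∈ V(G), a new vertex v_u and the arc u v_u. Assign cost 1 to every arc of D; assign the matrix M1 with entries (M1)11 = k and all other entries 0 to each pendant arc u v_u, and the matrix M2 with entries (M2)22 = 2 and all other entries 0 to each arc of D0. Then for every partition P = (X1, X2) of V(D) satisfying v_u ∈ X1 ⟺ u ∈ X1 for all u ∈ V(G), letting W = V(G) ∩ X2 and e(W) denote the number of edges of G with both endpoints in W, one has w^P(D) = k·|V(G)| − k·|W| + 2·e(W); in particular w^P(D) > k·|V(G)| if and only if 2·e(W) > k·|W| with W ≠ ∅, i.e., if and only if the average degree of the induced subgraph G[W] exceeds k. -/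

import Mathlib

/-- The weight `w^P(uv)` of an arc `uv` (with cost `c uv` and assigned matrix `f uv`)
under the partition `P = (X1, V \ X1)`. -/
def arcWeight {V : Type*} [DecidableEq V] (c : V × V → ℝ)
    (f : V × V → Matrix (Fin 2) (Fin 2) ℝ) (X1 : Finset V) (a : V × V) : ℝ :=
  c a * (if a.1 ∈ X1 then (if a.2 ∈ X1 then f a 0 0 else f a 0 1)
         else (if a.2 ∈ X1 then f a 1 0 else f a 1 1))

/-- The weight `w^P(D)` of the digraph with arc set `A` under the partition
`P = (X1, V \ X1)`. -/
def partWeight {V : Type*} [DecidableEq V] (A : Finset (V × V)) (c : V × V → ℝ)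
    (f : V × V → Matrix (Fin 2) (Fin 2) ℝ) (X1 : Finset V) : ℝ :=
  ∑ a ∈ A, arcWeight c f X1 a

/-- Reduction of {\sc Max Average Degree} to MWOP: orient `G` as `A0`, add a pendant
vertex `v_u = Sum.inr u` with arc `u → v_u` for each `u`, put matrix `M1 = !![k,0;0,0]`
on pendant arcs and `M2 = !![0,0;0,2]` on the arcs of `A0`, all costs `1`.  For any
partition `P = (X1, X2)` placing `v_u` on the same side as `u`, with `W = V(G) ∩ X2` and
`e(W)` the number of edges of `G` inside `W`, one has
`w^P(D) = k·|V(G)| − k·|W| + 2·e(W)`; in particular `w^P(D) > k·|V(G)|` iff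
`2·e(W) > k·|W|` with `W ≠ ∅`, i.e. iff the average degree of `G[W]` exceeds `k`. -/
theorem max_average_degree_reduction {V : Type*} [Fintype V] [DecidableEq V]
    (G : SimpleGraph V) [DecidableRel G.Adj] (k : ℝ)
    (A0 : Finset (V × V))
    (horient : ∀ u v : V, G.Adj u v ↔ ((u, v) ∈ A0 ∨ (v, u) ∈ A0))
    (hone : ∀ a ∈ A0, (a.2, a.1) ∉ A0)
    (hadj : ∀ a ∈ A0, G.Adj a.1 a.2)
    (X1 : Finset (V ⊕ V))
    (hpend : ∀ u : V, Sum.inr u ∈ X1 ↔ Sum.inl u ∈ X1) :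
    let A : Finset ((V ⊕ V) × (V ⊕ V)) :=
      A0.image (fun a => ((Sum.inl a.1 : V ⊕ V), (Sum.inl a.2 : V ⊕ V))) ∪
        Finset.univ.image (fun u : V => ((Sum.inl u : V ⊕ V), Sum.inr u))
    let f : (V ⊕ V) × (V ⊕ V) → Matrix (Fin 2) (Fin 2) ℝ := fun a =>
      match a.2 with
      | Sum.inr _ => !![k, 0; 0, 0]
      | Sum.inl _ => !![0, 0; 0, 2]
    let W : Finset V := Finset.univ.filter (fun u => Sum.inl u ∉ X1)
    let eW : ℕ := (G.edgeFinset.filter (fun e => ∀ v ∈ e, v ∈ W)).card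
    partWeight A (fun _ => 1) f X1
        = k * (Fintype.card V : ℝ) - k * (W.card : ℝ) + 2 * (eW : ℝ) ∧
    (partWeight A (fun _ => 1) f X1 > k * (Fintype.card V : ℝ) ↔
      (2 * (eW : ℝ) > k * (W.card : ℝ) ∧ W.Nonempty)) ∧
    (partWeight A (fun _ => 1) f X1 > k * (Fintype.card V : ℝ) ↔
      (W.Nonempty ∧ k < 2 * (eW : ℝ) / (W.card : ℝ))) := by
  intro A f W eW
  have hW : ∀ u : V, u ∈ W ↔ Sum.inl u ∉ X1 := by
    intro u; simp [W]
  -- disjointness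
  have hdisj : Disjoint (A0.image (fun a => ((Sum.inl a.1 : V ⊕ V), (Sum.inl a.2 : V ⊕ V))))
      (Finset.univ.image (fun u : V => ((Sum.inl u : V ⊕ V), Sum.inr u))) := by
    simp only [Finset.disjoint_left, Finset.mem_image]
    rintro x ⟨a, _, rfl⟩ ⟨u, _, h⟩
    simp at h
  have hsum : partWeight A (fun _ => 1) f X1 =
      (∑ a ∈ A0, arcWeight (fun _ => 1) f X1 (Sum.inl a.1, Sum.inl a.2))
      + ∑ u : V, arcWeight (fun _ => 1) f X1 (Sum.inl u, Sum.inr u) := by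
    rw [show partWeight A (fun _ => 1) f X1 = ∑ a ∈ A, arcWeight (fun _ => 1) f X1 a from rfl]
    rw [Finset.sum_union hdisj, Finset.sum_image, Finset.sum_image]
    · intro u _ v _ h; simpa using h
    · intro a _ b _ h
      simp only [Prod.mk.injEq, Sum.inl.injEq] at h
      exact Prod.ext h.1 h.2
  have h2 : ∑ u : V, arcWeight (fun _ => 1) f X1 (Sum.inl u, Sum.inr u)
      = ∑ u : V, (if Sum.inl u ∈ X1 then k else 0) := by
    refine Finset.sum_congr rfl fun u _ => ?_
    simp only [arcWeight, f, hpend u]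
    by_cases h : Sum.inl u ∈ X1 <;> simp [h]
  have h1 : ∑ a ∈ A0, arcWeight (fun _ => 1) f X1 (Sum.inl a.1, Sum.inl a.2)
      = ∑ a ∈ A0, (if a.1 ∈ W ∧ a.2 ∈ W then (2:ℝ) else 0) := by
    refine Finset.sum_congr rfl fun a _ => ?_
    simp only [arcWeight, f, hW]
    by_cases h : Sum.inl a.1 ∈ X1 <;> by_cases h' : Sum.inl a.2 ∈ X1 <;> simp [h, h']
  -- count of internal arcs equals eW
  have hcard : (A0.filter (fun a => a.1 ∈ W ∧ a.2 ∈ W)).card = eW := by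
    apply Finset.card_bij (t := G.edgeFinset.filter (fun e => ∀ v ∈ e, v ∈ W)) (fun (a : V × V) _ => s(a.1, a.2))
    · rintro a ha
      simp only [Finset.mem_filter] at ha ⊢
      refine ⟨SimpleGraph.mem_edgeFinset.2 ?_, ?_⟩
      · exact (SimpleGraph.mem_edgeSet G).2 (hadj a ha.1)
      · intro v hv
        rcases Sym2.mem_iff.1 hv with rfl | rfl
        · exact ha.2.1
        · exact ha.2.2
    · rintro a ha b hb h
      rw [Sym2.eq_iff] at h
      rcases h with ⟨h1, h2⟩ | ⟨h1, h2⟩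
      · exact Prod.ext h1 h2
      · exfalso
        simp only [Finset.mem_filter] at ha hb
        have hab : (a.2, a.1) = b := Prod.ext h2 h1
        exact hone a ha.1 (hab ▸ hb.1)
    · rintro e he
      simp only [Finset.mem_filter, SimpleGraph.mem_edgeFinset] at he
      induction e using Sym2.ind with
      | _ u v =>
        have hadjuv : G.Adj u v := he.1
        have hu : u ∈ W := he.2 u (Sym2.mem_mk_left u v)
        have hv : v ∈ W := he.2 v (Sym2.mem_mk_right u v)
        rcases (horient u v).1 hadjuv with h | h
        · exact ⟨(u, v), Finset.mem_filter.2 ⟨h, hu, hv⟩, rfl⟩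
        · exact ⟨(v, u), Finset.mem_filter.2 ⟨h, hv, hu⟩, Sym2.eq_swap⟩
  -- pendant sum value
  have hX1count : (Finset.univ.filter (fun u : V => Sum.inl u ∈ X1)).card
      = Fintype.card V - W.card := by
    have := Finset.card_filter_add_card_filter_not
      (s := (Finset.univ : Finset V)) (p := fun u : V => Sum.inl u ∈ X1)
    simp only [Finset.card_univ] at this
    have hb : W.card = (Finset.univ.filter (fun u : V => ¬ (Sum.inl u ∈ X1))).card := rfl
    omega
  have hWle : W.card ≤ Fintype.card V := by
    simpa using Finset.card_filter_le (Finset.univ : Finset V) _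
  have h2' : ∑ u : V, (if Sum.inl u ∈ X1 then k else 0)
      = k * (Fintype.card V : ℝ) - k * (W.card : ℝ) := by
    rw [← Finset.sum_filter]
    simp only [Finset.sum_const, nsmul_eq_mul, hX1count]
    rw [Nat.cast_sub hWle]
    ring
  have h1' : ∑ a ∈ A0, (if a.1 ∈ W ∧ a.2 ∈ W then (2:ℝ) else 0) = 2 * (eW : ℝ) := by
    rw [← Finset.sum_filter]
    simp [hcard, mul_comm]
  have hmain : partWeight A (fun _ => 1) f X1
      = k * (Fintype.card V : ℝ) - k * (W.card : ℝ) + 2 * (eW : ℝ) := by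
    rw [hsum, h1, h2, h1', h2']; ring
  -- eW = 0 when W empty
  have heW0 : W = ∅ → eW = 0 := by
    intro hWe
    simp only [eW, Finset.card_eq_zero]
    rw [Finset.filter_eq_empty_iff]
    intro e he
    rw [SimpleGraph.mem_edgeFinset] at he
    induction e using Sym2.ind with
    | _ u v =>
      intro h
      have := h u (Sym2.mem_mk_left u v)
      rw [hWe] at this
      exact absurd this (Finset.notMem_empty u)
  refine ⟨hmain, ?_, ?_⟩
  · rw [hmain]
    constructor
    · intro h
      have h' : 2 * (eW : ℝ) > k * (W.card : ℝ) := by linarith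
      refine ⟨h', ?_⟩
      rw [Finset.nonempty_iff_ne_empty]
      intro hWe
      rw [heW0 hWe, hWe] at h'
      simp at h'
    · rintro ⟨h, _⟩; linarith
  · rw [hmain]
    constructor
    · intro h
      have h' : 2 * (eW : ℝ) > k * (W.card : ℝ) := by linarith
      have hne : W.Nonempty := by
        rw [Finset.nonempty_iff_ne_empty]
        intro hWe
        rw [heW0 hWe, hWe] at h'
        simp at h'
      have hpos : (0 : ℝ) < (W.card : ℝ) := by
        exact_mod_cast Finset.card_pos.2 hne
      exact ⟨hne, (lt_div_iff₀ hpos).2 (by linarith)⟩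
    · rintro ⟨hne, h⟩
      have hpos : (0 : ℝ) < (W.card : ℝ) := by
        exact_mod_cast Finset.card_pos.2 hne
      have := (lt_div_iff₀ hpos).1 h
      linarith
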